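/- For y = 0, the beta-binomial probability equals βθ(1+βθ)(2+βθ)⋯(M-1+βθ) / (θ(1+θ)(2+θ)⋯(M-1+θ)), and its first-order Taylor expansion at θ=0 is β - αβθ·Σ_{k=1}^{M-1} 1/k + O(θ²). -/

import Mathlib

open Finset Filter

private lemma gamma_nat_add (n : ℕ) (x : ℝ) (hx : 0 < x) :
    Real.Gamma ((n : ℝ) + x) = (∏ k ∈ Finset.range n, ((k : ℝ) + x)) * Real.Gamma x := by
  induction n with
  | zero => simp
  | succ n ih =>
    have h1 : ((n + 1 : ℕ) : ℝ) + x = ((n : ℝ) + x) + 1 := by push_cast; ring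
    have h2 : (n : ℝ) + x ≠ 0 := by positivity
    rw [h1, Real.Gamma_add_one h2, ih, Finset.prod_range_succ]
    ring

private lemma range_fact (M : ℕ) (hM : 2 ≤ M) (f : ℕ → ℝ) :
    ∏ k ∈ Finset.range M, f k = f 0 * ∏ k ∈ Finset.Icc 1 (M - 1), f k := by
  have hM1 : M = (M - 1) + 1 := by omega
  have h3 : Finset.Ico 1 M = Finset.Icc 1 (M - 1) := by
    rw [← Finset.Ico_add_one_right_eq_Icc]; congr 1
  rw [Finset.range_eq_Ico, Finset.prod_eq_prod_Ico_succ_bot (by omega) f, h3]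

/-- The beta-binomial probability of the monomorphic sample `y = 0`. -/
noncomputable def betaBinomZero (α : ℝ) (M : ℕ) (θ : ℝ) : ℝ :=
  Real.Gamma θ / (Real.Gamma (α * θ) * Real.Gamma ((1 - α) * θ)) *
    (Real.Gamma (α * θ) * Real.Gamma ((M : ℝ) + (1 - α) * θ) / Real.Gamma ((M : ℝ) + θ))

/-- For `y = 0`, the beta-binomial probability equals
`βθ(1+βθ)⋯(M-1+βθ) / (θ(1+θ)⋯(M-1+θ))`, and its first-order Taylor expansion at
`θ = 0` is `β - αβθ·Σ_{k=1}^{M-1} 1/k + O(θ²)`. -/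
theorem betaBinomZero_small_theta (α β : ℝ) (hα : 0 < α) (hα1 : α < 1)
    (hβ : β = 1 - α) (M : ℕ) (hM : 2 ≤ M) :
    (∀ θ : ℝ, 0 < θ →
      betaBinomZero α M θ =
        (∏ k ∈ Finset.range M, ((k : ℝ) + β * θ)) /
          (∏ k ∈ Finset.range M, ((k : ℝ) + θ))) ∧
    Filter.Tendsto (betaBinomZero α M) (nhdsWithin 0 (Set.Ioi 0)) (nhds β) ∧
    Filter.Tendsto (fun θ => (betaBinomZero α M θ - β) / θ) (nhdsWithin 0 (Set.Ioi 0))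
      (nhds (-(α * β * ∑ k ∈ Finset.Icc 1 (M - 1), 1 / (k : ℝ)))) := by
  have hβ0 : 0 < β := by rw [hβ]; linarith
  -- Part 1
  have part1 : ∀ θ : ℝ, 0 < θ →
      betaBinomZero α M θ =
        (∏ k ∈ Finset.range M, ((k : ℝ) + β * θ)) /
          (∏ k ∈ Finset.range M, ((k : ℝ) + θ)) := by
    intro θ hθ
    have hβθ : 0 < (1 - α) * θ := by
      have : 0 < 1 - α := by linarith
      positivity
    have hαθ : 0 < Real.Gamma (α * θ) := Real.Gamma_pos_of_pos (by positivity)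
    have hGβθ : 0 < Real.Gamma ((1 - α) * θ) := Real.Gamma_pos_of_pos hβθ
    have hGθ : 0 < Real.Gamma θ := Real.Gamma_pos_of_pos hθ
    have hPθ : 0 < ∏ k ∈ Finset.range M, ((k : ℝ) + θ) := by
      apply Finset.prod_pos; intro k _; positivity
    unfold betaBinomZero
    rw [gamma_nat_add M ((1 - α) * θ) hβθ, gamma_nat_add M θ hθ, ← hβ]
    field_simp
  refine ⟨part1, ?_⟩
  -- the smooth extension
  set h : ℝ → ℝ := fun θ => β * ∏ k ∈ Finset.Icc 1 (M - 1), (((k : ℝ) + β * θ) / ((k : ℝ) + θ))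
    with hh
  have heq : ∀ θ : ℝ, 0 < θ → betaBinomZero α M θ = h θ := by
    intro θ hθ
    rw [part1 θ hθ, range_fact M hM (fun k => (k : ℝ) + β * θ),
      range_fact M hM (fun k => (k : ℝ) + θ)]
    simp only [hh, Nat.cast_zero, zero_add]
    rw [Finset.prod_div_distrib]
    have h1 : ∀ k ∈ Finset.Icc 1 (M - 1), ((k : ℝ) + θ) ≠ 0 := by
      intro k hk
      have : 1 ≤ k := (Finset.mem_Icc.mp hk).1
      have : (1 : ℝ) ≤ (k : ℝ) := by exact_mod_cast this
      positivity
    have h2 : (∏ k ∈ Finset.Icc 1 (M - 1), ((k : ℝ) + θ)) ≠ 0 :=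
      Finset.prod_ne_zero_iff.mpr h1
    field_simp
  have hmemfactor : ∀ k ∈ Finset.Icc 1 (M - 1), (1 : ℝ) ≤ (k : ℝ) := by
    intro k hk
    exact_mod_cast (Finset.mem_Icc.mp hk).1
  -- h has derivative at 0
  have hprod : HasDerivAt (fun θ => ∏ k ∈ Finset.Icc 1 (M - 1),
      (((k : ℝ) + β * θ) / ((k : ℝ) + θ)))
      (∑ k ∈ Finset.Icc 1 (M - 1),
        (∏ j ∈ (Finset.Icc 1 (M - 1)).erase k, (((j : ℝ) + β * 0) / ((j : ℝ) + 0))) •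
          ((β - 1) / (k : ℝ))) 0 := by
    apply HasDerivAt.fun_finsetProd
    intro k hk
    have hk1 : (1 : ℝ) ≤ (k : ℝ) := hmemfactor k hk
    have hkne : (k : ℝ) + 0 ≠ 0 := by rw [add_zero]; exact ne_of_gt (by linarith)
    have hnum : HasDerivAt (fun θ : ℝ => (k : ℝ) + β * θ) β 0 := by
      simpa using ((hasDerivAt_id 0).const_mul β).const_add (k : ℝ)
    have hden : HasDerivAt (fun θ : ℝ => (k : ℝ) + θ) 1 0 := by
      simpa using (hasDerivAt_id 0).const_add (k : ℝ)
    have := hnum.fun_div hden hkne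
    convert this using 1
    field_simp
    ring
  have hval : ∀ j ∈ Finset.Icc 1 (M - 1), ((j : ℝ) + β * 0) / ((j : ℝ) + 0) = 1 := by
    intro j hj
    have : (1 : ℝ) ≤ (j : ℝ) := hmemfactor j hj
    rw [mul_zero, add_zero, div_self (ne_of_gt (by linarith))]
  have hderivval : (∑ k ∈ Finset.Icc 1 (M - 1),
      (∏ j ∈ (Finset.Icc 1 (M - 1)).erase k, (((j : ℝ) + β * 0) / ((j : ℝ) + 0))) •
        ((β - 1) / (k : ℝ))) = -(α * ∑ k ∈ Finset.Icc 1 (M - 1), 1 / (k : ℝ)) := by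
    have hterm : ∀ k ∈ Finset.Icc 1 (M - 1),
        (∏ j ∈ (Finset.Icc 1 (M - 1)).erase k, (((j : ℝ) + β * 0) / ((j : ℝ) + 0))) •
          ((β - 1) / (k : ℝ)) = -(α * (1 / (k : ℝ))) := by
      intro k hk
      rw [Finset.prod_congr rfl (fun j hj => hval j (Finset.mem_of_mem_erase hj)),
        Finset.prod_const_one, one_smul, hβ]
      ring
    rw [Finset.sum_congr rfl hterm, Finset.mul_sum, ← Finset.sum_neg_distrib]
  have hh0 : h 0 = β := by
    simp only [hh]
    rw [Finset.prod_congr rfl hval, Finset.prod_const_one, mul_one]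
  have hder : HasDerivAt h (-(α * β * ∑ k ∈ Finset.Icc 1 (M - 1), 1 / (k : ℝ))) 0 := by
    have := (hprod.const_mul β)
    rw [hderivval] at this
    exact this.congr_deriv (by ring)
  have hsub : nhdsWithin (0 : ℝ) (Set.Ioi 0) ≤ nhdsWithin (0 : ℝ) {(0 : ℝ)}ᶜ := by
    apply nhdsWithin_mono
    intro x hx
    exact ne_of_gt hx
  have hEv : betaBinomZero α M =ᶠ[nhdsWithin (0 : ℝ) (Set.Ioi 0)] h := by
    filter_upwards [self_mem_nhdsWithin] with θ hθ using heq θ hθ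
  constructor
  · -- limit to β
    have hcont : Filter.Tendsto h (nhdsWithin 0 (Set.Ioi 0)) (nhds β) := by
      have := hder.continuousAt.continuousWithinAt (s := Set.Ioi 0)
      rw [ContinuousWithinAt, hh0] at this
      exact this
    exact hcont.congr' hEv.symm
  · -- slope limit
    have hslope := hasDerivAt_iff_tendsto_slope.mp hder
    have hslope2 : Filter.Tendsto (fun θ => (h θ - β) / θ) (nhdsWithin 0 (Set.Ioi 0))
        (nhds (-(α * β * ∑ k ∈ Finset.Icc 1 (M - 1), 1 / (k : ℝ)))) := by
      have := hslope.mono_left hsub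
      apply this.congr
      intro θ
      simp [slope, hh0, div_eq_inv_mul]
    apply hslope2.congr' _
    filter_upwards [self_mem_nhdsWithin] with θ hθ
    rw [heq θ hθ]
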